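/- Let M* ∈ (0,1) with M^D ≤ M*, let N ≥ 1 be an integer, and let u⁰, u¹, …, u^N : 𝒯 → [0,∞)ⁿ be such that for each k = 1,…,N the function u^k solves one step of the implicit Euler finite-volume scheme with previous values u^{k−1}, such that M^k_K = Σᵢ u^k_{i,K} ≤ M* for all K and all 0 ≤ k ≤ N, and such that the entropy inequality H(u^k) + Δt · Σᵢ₌₁ⁿ Iᵢ(u^k) ≤ H(u^{k−1}) holds for each k = 1,…,N. Then for every i = 1,…,n: Σ_{k=1}^N Δt · Σ_{σ∈ℰ} τ_σ (D_σ vᵢ(u^k))² ≤ 4 q(M*) H(u⁰) / p(M*)³ (discrete gradient estimate). -/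

import Mathlib

open Real Set MeasureTheory

/-- `q(M) = (p(M)/M) ∫₀^M s^a / ((1-s)^b p(s)²) ds`. -/
noncomputable def qfun (p : ℝ → ℝ) (a b : ℝ) (M : ℝ) : ℝ :=
  p M / M * ∫ s in (0:ℝ)..M, s ^ a / ((1 - s) ^ b * p s ^ 2)

/-- `vᵢ(u) = uᵢ q(M)/p(M)` with `M = Σⱼ uⱼ`, extended by `0` when `M = 0`. -/
noncomputable def vfun (p : ℝ → ℝ) (a b : ℝ) {n : ℕ} (u : Fin n → ℝ) (i : Fin n) : ℝ :=
  if (∑ j, u j) = 0 then 0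
  else u i * qfun p a b (∑ j, u j) / p (∑ j, u j)

/-- Edge structure of a finite-volume graph: `Sum.inl K` is a Dirichlet edge at
cell `K`, `Sum.inr (K, L)` an interior edge joining `K` and `L`. -/
abbrev EdgeEnds (T E : Type) := E → T ⊕ T × T

/-- `D_σ w = w_{K,σ} − w_K` for an edge `σ` (with the orientation of `ends`),
with exterior Dirichlet value `wD`. -/
noncomputable def edgeDiff {T E : Type} (ends : EdgeEnds T E) (w : T → ℝ) (wD : ℝ) (σ : E) : ℝ :=
  match ends σ with
  | Sum.inl K => wD - w K
  | Sum.inr KL => w KL.2 - w KL.1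

/-- `D_{K,σ} w = w_{K,σ} − w_K` viewed from cell `K`, equal to `0` if `σ` is not
incident to `K`. -/
noncomputable def cellDiff {T E : Type} [DecidableEq T] (ends : EdgeEnds T E)
    (w : T → ℝ) (wD : ℝ) (σ : E) (K : T) : ℝ :=
  match ends σ with
  | Sum.inl K' => if K' = K then wD - w K else 0
  | Sum.inr KL =>
      if KL.1 = K then w KL.2 - w K else if KL.2 = K then w KL.1 - w K else 0

/-- `(p_σ)² = (p(M_K)² + p(M_{K,σ})²)/2` on an edge `σ`, the exterior value on
Dirichlet edges being `M^D`. -/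
noncomputable def pEdgeSq (p : ℝ → ℝ) {T E : Type} (ends : EdgeEnds T E)
    (Mf : T → ℝ) (MD : ℝ) (σ : E) : ℝ :=
  match ends σ with
  | Sum.inl K => (p (Mf K) ^ 2 + p MD ^ 2) / 2
  | Sum.inr KL => (p (Mf KL.1) ^ 2 + p (Mf KL.2) ^ 2) / 2

/-- One step of the implicit Euler finite-volume scheme with unit diffusivities:
`ucur : 𝒯 → [0,∞)ⁿ` with `Σᵢ ucurᵢ < 1` on each cell, satisfying
`m(K)(u^k_{i,K} − u^{k−1}_{i,K})/Δt = Σ_σ τ_σ (p_σ^k)² D_{K,σ}(vᵢ(u^k))`. -/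
def SchemeStep (p : ℝ → ℝ) (a b : ℝ) (n : ℕ) {T E : Type}
    [Fintype T] [Fintype E] [DecidableEq T] (ends : EdgeEnds T E)
    (m : T → ℝ) (τ : E → ℝ) (uD : Fin n → ℝ) (Δt : ℝ)
    (uprev ucur : T → Fin n → ℝ) : Prop :=
  (∀ K i, 0 ≤ ucur K i) ∧ (∀ K, ∑ i, ucur K i < 1) ∧
  ∀ K i, m K * (ucur K i - uprev K i) / Δt =
    ∑ σ : E, τ σ * pEdgeSq p ends (fun L => ∑ j, ucur L j) (∑ j, uD j) σ *
      cellDiff ends (fun L => vfun p a b (ucur L) i) (vfun p a b uD i) σ K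

/-- Entropy density `h(u)` (extended by continuity when some `uᵢ = 0`). -/
noncomputable def hent (p : ℝ → ℝ) (a b : ℝ) {n : ℕ} (u : Fin n → ℝ) : ℝ :=
  (∑ i, (u i * (Real.log (u i) - 1) + 1)) +
    ∫ s in (0:ℝ)..(∑ i, u i), Real.log (qfun p a b s / p s)

/-- Relative entropy density `h*(u|u^D)`. -/
noncomputable def hstar (p : ℝ → ℝ) (a b : ℝ) {n : ℕ} (uD u : Fin n → ℝ) : ℝ :=
  hent p a b u - hent p a b uD -
    ∑ i, Real.log (uD i * qfun p a b (∑ j, uD j) / p (∑ j, uD j)) * (u i - uD i)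

/-- Discrete relative entropy `H(u) = Σ_K m(K) h*(u_K|u^D)`. -/
noncomputable def Hent (p : ℝ → ℝ) (a b : ℝ) {n : ℕ} {T : Type} [Fintype T]
    (m : T → ℝ) (uD : Fin n → ℝ) (u : T → Fin n → ℝ) : ℝ :=
  ∑ K, m K * hstar p a b uD (u K)

/-- Discrete entropy production `Iᵢ(u) = Σ_σ τ_σ p_σ² (D_σ √(vᵢ(u)))²`. -/
noncomputable def Iprod (p : ℝ → ℝ) (a b : ℝ) {n : ℕ} {T E : Type}
    [Fintype T] [Fintype E] (ends : EdgeEnds T E) (τ : E → ℝ)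
    (uD : Fin n → ℝ) (u : T → Fin n → ℝ) (i : Fin n) : ℝ :=
  ∑ σ : E, τ σ * pEdgeSq p ends (fun L => ∑ j, u L j) (∑ j, uD j) σ *
    (edgeDiff ends (fun L => Real.sqrt (vfun p a b (u L) i))
      (Real.sqrt (vfun p a b uD i)) σ) ^ 2


set_option linter.unusedSectionVars false
set_option linter.deprecated false

/-- scalar entropy convexity -/
lemma sge_entropy_scalar {x y : ℝ} (hx : 0 ≤ x) (hy : 0 < y) :
    y * (Real.log y - 1) + 1 + Real.log y * (x - y) ≤ x * (Real.log x - 1) + 1 := by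
  rcases eq_or_lt_of_le hx with h0 | hx0
  · rw [← h0]
    have h1 : y * (Real.log y - 1) + 1 + Real.log y * (0 - y) = 1 - y := by ring
    rw [h1]
    simp [Real.log_zero]
    linarith
  · have key : Real.log y - Real.log x ≤ y / x - 1 := by
      have h := Real.log_le_sub_one_of_pos (div_pos hy hx0)
      rwa [Real.log_div hy.ne' hx0.ne'] at h
    have h2 := mul_le_mul_of_nonneg_left key hx0.le
    rw [mul_sub, mul_sub, mul_div_cancel₀ _ hx0.ne', mul_one] at h2
    nlinarith [h2]

/-- square-root difference bound -/
lemma sge_sq_diff_le {A B V : ℝ} (hA : 0 ≤ A) (hB : 0 ≤ B) (hAV : A ≤ V) (hBV : B ≤ V) :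
    (A - B) ^ 2 ≤ 4 * V * (Real.sqrt A - Real.sqrt B) ^ 2 := by
  have hV : 0 ≤ V := le_trans hA hAV
  have hx2 : Real.sqrt A ^ 2 = A := Real.sq_sqrt hA
  have hy2 : Real.sqrt B ^ 2 = B := Real.sq_sqrt hB
  have hs2 : Real.sqrt V ^ 2 = V := Real.sq_sqrt hV
  have hxs : Real.sqrt A ≤ Real.sqrt V := Real.sqrt_le_sqrt hAV
  have hys : Real.sqrt B ≤ Real.sqrt V := Real.sqrt_le_sqrt hBV
  have hx0 : 0 ≤ Real.sqrt A := Real.sqrt_nonneg _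
  have hy0 : 0 ≤ Real.sqrt B := Real.sqrt_nonneg _
  have h4 : (Real.sqrt A + Real.sqrt B) ^ 2 ≤ 4 * V := by nlinarith
  calc (A - B) ^ 2 = (Real.sqrt A ^ 2 - Real.sqrt B ^ 2) ^ 2 := by rw [hx2, hy2]
    _ = (Real.sqrt A + Real.sqrt B) ^ 2 * (Real.sqrt A - Real.sqrt B) ^ 2 := by ring
    _ ≤ 4 * V * (Real.sqrt A - Real.sqrt B) ^ 2 :=
        mul_le_mul_of_nonneg_right h4 (sq_nonneg _)

/-- per-edge scalar bound -/
lemma sge_edge_scalar {τ' ps V pm A B : ℝ} (hτ : 0 ≤ τ') (hA : 0 ≤ A) (hB : 0 ≤ B)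
    (hAV : A ≤ V) (hBV : B ≤ V) (hpm : 0 < pm) (hps : pm ≤ ps) :
    τ' * (A - B) ^ 2 ≤ 4 * V / pm * (τ' * ps * (Real.sqrt A - Real.sqrt B) ^ 2) := by
  have hV : 0 ≤ V := le_trans hA hAV
  have key := sge_sq_diff_le hA hB hAV hBV
  have h1 : τ' * (A - B) ^ 2 ≤ τ' * (4 * V * (Real.sqrt A - Real.sqrt B) ^ 2) :=
    mul_le_mul_of_nonneg_left key hτ
  have h2 : τ' * (4 * V * (Real.sqrt A - Real.sqrt B) ^ 2)
      = 4 * V / pm * (τ' * pm * (Real.sqrt A - Real.sqrt B) ^ 2) := by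
    field_simp
  have h3 : τ' * pm * (Real.sqrt A - Real.sqrt B) ^ 2
      ≤ τ' * ps * (Real.sqrt A - Real.sqrt B) ^ 2 :=
    mul_le_mul_of_nonneg_right (mul_le_mul_of_nonneg_left hps hτ) (sq_nonneg _)
  have h5 : (0:ℝ) ≤ 4 * V / pm := by positivity
  have h4 := mul_le_mul_of_nonneg_left h3 h5
  linarith [h1, h2 ▸ h1]

lemma sge_neg_log_le {s : ℝ} (hs : 0 < s) : -Real.log s ≤ 2 * s ^ (-(1/2) : ℝ) := by
  have ht : 0 < s ^ ((1:ℝ)/2) := Real.rpow_pos_of_pos hs _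
  have hlog : Real.log (s ^ ((1:ℝ)/2)) = (1/2) * Real.log s := Real.log_rpow hs _
  have h1 : -Real.log (s ^ ((1:ℝ)/2)) ≤ (s ^ ((1:ℝ)/2))⁻¹ := by
    have := Real.log_le_sub_one_of_pos (inv_pos.2 ht)
    rw [Real.log_inv] at this
    have h0 : 0 < (s ^ ((1:ℝ)/2))⁻¹ := inv_pos.2 ht
    linarith
  have h2 : (s ^ ((1:ℝ)/2))⁻¹ = s ^ (-(1/2) : ℝ) := by
    rw [← Real.rpow_neg hs.le]
  rw [hlog] at h1
  rw [← h2]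
  linarith

noncomputable def sge_f (p : ℝ → ℝ) (a b : ℝ) (s : ℝ) : ℝ :=
  s ^ a / ((1 - s) ^ b * p s ^ 2)

noncomputable def sge_F (p : ℝ → ℝ) (a b M : ℝ) : ℝ :=
  ∫ s in (0:ℝ)..M, sge_f p a b s

lemma sge_qfun_eq (p : ℝ → ℝ) (a b M : ℝ) :
    qfun p a b M = p M / M * sge_F p a b M := rfl

section analytic

variable {a b : ℝ} {p : ℝ → ℝ} {Mstar : ℝ}
variable (ha : 1 ≤ a) (hb : 1 ≤ b)
  (hpc : ContinuousOn p (Icc 0 1)) (hpa : AntitoneOn p (Icc 0 1))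
  (hppos : ∀ M ∈ Ico (0:ℝ) 1, 0 < p M)
  (hM1 : 0 < Mstar) (hM2 : Mstar < 1)

include hppos hM2 in
lemma sge_p_pos {s : ℝ} (hs : s ∈ Icc 0 Mstar) : 0 < p s :=
  hppos s ⟨hs.1, lt_of_le_of_lt hs.2 hM2⟩

include hpa hppos hM1 hM2 in
lemma sge_p_sq_le {s : ℝ} (hs : s ∈ Icc 0 Mstar) : p Mstar ^ 2 ≤ p s ^ 2 := by
  have h1 : p Mstar ≤ p s :=
    hpa ⟨hs.1, le_of_lt (lt_of_le_of_lt hs.2 hM2)⟩ ⟨hM1.le, hM2.le⟩ hs.2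
  have h2 : 0 < p Mstar := hppos Mstar ⟨hM1.le, hM2⟩
  nlinarith

include ha hb hpc hppos hM2 in
lemma sge_f_cont : ContinuousOn (sge_f p a b) (Icc 0 Mstar) := by
  have h1 : ContinuousOn (fun s : ℝ => s ^ a) (Icc 0 Mstar) := fun s _ =>
    (Real.continuousAt_rpow_const s a (Or.inr (by linarith))).continuousWithinAt
  have h2 : ContinuousOn (fun s : ℝ => (1 - s) ^ b) (Icc 0 Mstar) := by
    intro s _
    exact ((Real.continuousAt_rpow_const (1 - s) b (Or.inr (by linarith))).comp
      ((continuous_const.sub continuous_id).continuousAt)).continuousWithinAt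
  have h3 : ContinuousOn (fun s : ℝ => p s ^ 2) (Icc 0 Mstar) :=
    (hpc.mono (Icc_subset_Icc le_rfl hM2.le)).pow 2
  exact h1.div (h2.mul h3) (fun s hs => by
    have hp := sge_p_pos hppos hM2 hs
    have h1s : (0:ℝ) < 1 - s := by
      have := hs.2; simp only [mem_Icc] at hs; linarith
    positivity)

include hb in
lemma sge_f_nonneg {s : ℝ} (h0 : 0 ≤ s) (h1 : s ≤ 1) : 0 ≤ sge_f p a b s := by
  unfold sge_f
  have := Real.rpow_nonneg (x := 1 - s) (by linarith) b
  have := Real.rpow_nonneg h0 a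
  positivity

include ha hb hpa hppos hM2 in
lemma sge_f_mono {s t : ℝ} (hs : s ∈ Icc 0 Mstar) (ht : t ∈ Icc 0 Mstar) (hst : s ≤ t) :
    sge_f p a b s ≤ sge_f p a b t := by
  have hs1 : s ≤ 1 := le_trans hs.2 hM2.le
  have ht1 : t ≤ 1 := le_trans ht.2 hM2.le
  have hpt : 0 < p t := sge_p_pos hppos hM2 ht
  have hnum : s ^ a ≤ t ^ a := Real.rpow_le_rpow hs.1 hst (by linarith)
  have hd1 : (1 - t) ^ b ≤ (1 - s) ^ b := by
    apply Real.rpow_le_rpow (by linarith [lt_of_le_of_lt ht.2 hM2]) (by linarith) (by linarith)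
  have hpts : p t ≤ p s :=
    hpa ⟨hs.1, hs1⟩ ⟨ht.1, ht1⟩ hst
  have hd2 : p t ^ 2 ≤ p s ^ 2 := by nlinarith
  have hdt : 0 < (1 - t) ^ b * p t ^ 2 := by
    have h1t : (0:ℝ) < 1 - t := by linarith [lt_of_le_of_lt ht.2 hM2]
    positivity
  have hdd : (1 - t) ^ b * p t ^ 2 ≤ (1 - s) ^ b * p s ^ 2 :=
    mul_le_mul hd1 hd2 (sq_nonneg _) (Real.rpow_nonneg (by linarith) b)
  exact div_le_div₀ (Real.rpow_nonneg ht.1 a) hnum hdt hdd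

include ha hb hpc hppos hM2 in
lemma sge_f_intble {x y : ℝ} (hx : x ∈ Icc 0 Mstar) (hy : y ∈ Icc 0 Mstar) :
    IntervalIntegrable (sge_f p a b) volume x y :=
  ((sge_f_cont ha hb hpc hppos hM2).mono (uIcc_subset_Icc hx hy)).intervalIntegrable

include ha hb hpc hppos hM1 hM2 in
lemma sge_F_sub {x y : ℝ} (hx : x ∈ Icc 0 Mstar) (hy : y ∈ Icc 0 Mstar) :
    sge_F p a b y - sge_F p a b x = ∫ s in x..y, sge_f p a b s := by
  have h0 : (0:ℝ) ∈ Icc (0:ℝ) Mstar := ⟨le_rfl, hM1.le⟩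
  exact intervalIntegral.integral_interval_sub_left
    (sge_f_intble ha hb hpc hppos hM2 h0 hy) (sge_f_intble ha hb hpc hppos hM2 h0 hx)

include ha hb hpc hppos hM2 in
lemma sge_F_nonneg {M : ℝ} (hM : M ∈ Icc 0 Mstar) : 0 ≤ sge_F p a b M := by
  apply intervalIntegral.integral_nonneg hM.1
  intro s hs
  exact sge_f_nonneg hb hs.1 (le_trans hs.2 (le_trans hM.2 hM2.le))

include ha hb hpc hppos hM1 hM2 in
lemma sge_F_mono {x y : ℝ} (hx : x ∈ Icc 0 Mstar) (hy : y ∈ Icc 0 Mstar) (hxy : x ≤ y) :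
    sge_F p a b x ≤ sge_F p a b y := by
  have h := sge_F_sub ha hb hpc hppos hM1 hM2 hx hy
  have hnn : 0 ≤ ∫ s in x..y, sge_f p a b s := by
    apply intervalIntegral.integral_nonneg hxy
    intro s hs
    exact sge_f_nonneg hb (le_trans hx.1 hs.1) (le_trans hs.2 (le_trans hy.2 hM2.le))
  linarith

include ha hb hpc hpa hppos hM1 hM2 in
lemma sge_F_ratio_mono {s t : ℝ} (hs0 : 0 < s) (hst : s ≤ t) (ht : t ≤ Mstar) :
    sge_F p a b s / s ≤ sge_F p a b t / t := by
  have hsI : s ∈ Icc 0 Mstar := ⟨hs0.le, le_trans hst ht⟩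
  have htI : t ∈ Icc 0 Mstar := ⟨le_trans hs0.le hst, ht⟩
  have h0I : (0:ℝ) ∈ Icc (0:ℝ) Mstar := ⟨le_rfl, hM1.le⟩
  -- F s ≤ s * f s
  have h1 : sge_F p a b s ≤ s * sge_f p a b s := by
    have hcmp : ∀ x ∈ Icc (0:ℝ) s, sge_f p a b x ≤ sge_f p a b s := fun x hx =>
      sge_f_mono ha hb hpa hppos hM2 ⟨hx.1, le_trans hx.2 hsI.2⟩ hsI hx.2
    have := intervalIntegral.integral_mono_on hs0.le
      (sge_f_intble ha hb hpc hppos hM2 h0I hsI)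
      (intervalIntegrable_const) hcmp
    rw [intervalIntegral.integral_const, smul_eq_mul, sub_zero] at this
    exact this
  -- F t - F s ≥ (t - s) * f s
  have h2 : (t - s) * sge_f p a b s ≤ sge_F p a b t - sge_F p a b s := by
    rw [sge_F_sub ha hb hpc hppos hM1 hM2 hsI htI]
    have hcmp : ∀ x ∈ Icc s t, sge_f p a b s ≤ sge_f p a b x := fun x hx =>
      sge_f_mono ha hb hpa hppos hM2 hsI ⟨le_trans hs0.le hx.1, le_trans hx.2 ht⟩ hx.1
    have := intervalIntegral.integral_mono_on hst
      (intervalIntegrable_const)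
      (sge_f_intble ha hb hpc hppos hM2 hsI htI) hcmp
    rw [intervalIntegral.integral_const, smul_eq_mul] at this
    exact this
  have ht0 : 0 < t := lt_of_lt_of_le hs0 hst
  rw [div_le_div_iff₀ hs0 ht0]
  nlinarith [mul_le_mul_of_nonneg_left h2 hs0.le, h1, mul_nonneg (sub_nonneg.2 hst) (sub_nonneg.2 h1)]

include ha hb hpc hpa hppos hM1 hM2 in
lemma sge_F_lb {s : ℝ} (hs0 : 0 < s) (hs : s ≤ Mstar) :
    s ^ (a + 1) / ((a + 1) * p 0 ^ 2) ≤ sge_F p a b s := by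
  have hp0 : 0 < p 0 := hppos 0 ⟨le_rfl, one_pos⟩
  have hsI : s ∈ Icc 0 Mstar := ⟨hs0.le, hs⟩
  have h0I : (0:ℝ) ∈ Icc (0:ℝ) Mstar := ⟨le_rfl, hM1.le⟩
  have hcmp : ∀ x ∈ Icc (0:ℝ) s, x ^ a / p 0 ^ 2 ≤ sge_f p a b x := by
    intro x hx
    obtain ⟨hx0, hxs⟩ := hx
    have hx : x ∈ Icc (0:ℝ) s := ⟨hx0, hxs⟩
    have hx1 : x < 1 := lt_of_le_of_lt (le_trans hx.2 hs) hM2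
    have hpx : 0 < p x := hppos x ⟨hx.1, hx1⟩
    have hb1 : (1 - x) ^ b ≤ 1 :=
      Real.rpow_le_one (by linarith) (by linarith) (by linarith)
    have hb0 : 0 < (1 - x) ^ b := Real.rpow_pos_of_pos (by linarith) b
    have hpxp0 : p x ≤ p 0 := hpa ⟨le_rfl, one_pos.le⟩ ⟨hx.1, hx1.le⟩ hx.1
    have hden : (1 - x) ^ b * p x ^ 2 ≤ p 0 ^ 2 := by nlinarith
    have hdenpos : 0 < (1 - x) ^ b * p x ^ 2 := by positivity
    unfold sge_f
    exact div_le_div_of_nonneg_left (Real.rpow_nonneg hx.1 a) hdenpos hden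
  have hIl : IntervalIntegrable (fun x : ℝ => x ^ a / p 0 ^ 2) volume 0 s :=
    (intervalIntegral.intervalIntegrable_rpow' (by linarith)).div_const _
  have hmono := intervalIntegral.integral_mono_on hs0.le hIl
    (sge_f_intble ha hb hpc hppos hM2 h0I hsI) hcmp
  have hcalc : (∫ x in (0:ℝ)..s, x ^ a / p 0 ^ 2) = s ^ (a + 1) / ((a + 1) * p 0 ^ 2) := by
    rw [intervalIntegral.integral_div, integral_rpow (Or.inl (by linarith)),
      Real.zero_rpow (by linarith), sub_zero]
    field_simp
  rw [hcalc] at hmono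
  exact hmono

include ha hb hpc hpa hppos hM1 hM2 in
lemma sge_F_pos {s : ℝ} (hs0 : 0 < s) (hs : s ≤ Mstar) : 0 < sge_F p a b s := by
  have hp0 : 0 < p 0 := hppos 0 ⟨le_rfl, one_pos⟩
  have := sge_F_lb ha hb hpc hpa hppos hM1 hM2 hs0 hs
  have hlb : 0 < s ^ (a + 1) / ((a + 1) * p 0 ^ 2) := by
    have := Real.rpow_pos_of_pos hs0 (a + 1)
    positivity
  linarith

end analytic

noncomputable def psif (p : ℝ → ℝ) (a b s : ℝ) : ℝ := Real.log (qfun p a b s / p s)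

section analytic2

variable {a b : ℝ} {p : ℝ → ℝ} {Mstar : ℝ}
variable (ha : 1 ≤ a) (hb : 1 ≤ b)
  (hpc : ContinuousOn p (Icc 0 1)) (hpa : AntitoneOn p (Icc 0 1))
  (hppos : ∀ M ∈ Ico (0:ℝ) 1, 0 < p M)
  (hM1 : 0 < Mstar) (hM2 : Mstar < 1)

include hppos hM2 in
lemma sge_psif_eq {s : ℝ} (hs : s ∈ Ioc 0 Mstar) :
    psif p a b s = Real.log (sge_F p a b s / s) := by
  have hp : 0 < p s := sge_p_pos hppos hM2 ⟨hs.1.le, hs.2⟩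
  have hs0 : (0:ℝ) < s := hs.1
  unfold psif
  rw [sge_qfun_eq]
  congr 1
  field_simp

include ha hb hpc hpa hppos hM1 hM2 in
lemma sge_psif_mono {s t : ℝ} (hs : s ∈ Ioc 0 Mstar) (ht : t ∈ Ioc 0 Mstar) (hst : s ≤ t) :
    psif p a b s ≤ psif p a b t := by
  rw [sge_psif_eq hppos hM2 hs, sge_psif_eq hppos hM2 ht]
  exact Real.log_le_log
    (div_pos (sge_F_pos ha hb hpc hpa hppos hM1 hM2 hs.1 hs.2) hs.1)
    (sge_F_ratio_mono ha hb hpc hpa hppos hM1 hM2 hs.1 hst ht.2)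

include ha hb hpc hpa hppos hM1 hM2 in
lemma sge_psif_contOn : ContinuousOn (psif p a b) (Ioc 0 Mstar) := by
  have hFc : ContinuousOn (sge_F p a b) (Icc 0 Mstar) := by
    have hint : IntegrableOn (sge_f p a b) (uIcc 0 Mstar) volume := by
      rw [uIcc_of_le hM1.le]
      exact (sge_f_cont ha hb hpc hppos hM2).integrableOn_Icc
    have := intervalIntegral.continuousOn_primitive_interval (μ := volume) hint
    rwa [uIcc_of_le hM1.le] at this
  have hc : ContinuousOn (fun s => Real.log (sge_F p a b s / s)) (Ioc 0 Mstar) := by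
    apply ContinuousOn.log
    · exact (hFc.mono Ioc_subset_Icc_self).div continuousOn_id (fun s hs => hs.1.ne')
    · intro s hs
      exact (div_pos (sge_F_pos ha hb hpc hpa hppos hM1 hM2 hs.1 hs.2) hs.1).ne'
  exact hc.congr (fun s hs => sge_psif_eq hppos hM2 hs)

include ha hb hpc hpa hppos hM1 hM2 in
lemma sge_psif_intOn : IntegrableOn (psif p a b) (Ioc 0 Mstar) volume := by
  have hp0 : 0 < p 0 := hppos 0 ⟨le_rfl, one_pos⟩
  set c0 : ℝ := (a + 1) * p 0 ^ 2 with hc0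
  have hc0pos : 0 < c0 := by positivity
  set C : ℝ := |Real.log (sge_F p a b Mstar)| + |Real.log c0| with hC
  set K : ℝ := 2 * (a + 1) with hK
  have hFMs : 0 < sge_F p a b Mstar := sge_F_pos ha hb hpc hpa hppos hM1 hM2 hM1 le_rfl
  have hbound : ∀ s ∈ Ioc (0:ℝ) Mstar, ‖psif p a b s‖ ≤ C + K * s ^ (-(1/2) : ℝ) := by
    intro s hs
    have hs0 : 0 < s := hs.1
    have hs1 : s ≤ 1 := le_trans hs.2 hM2.le
    have hFs : 0 < sge_F p a b s := sge_F_pos ha hb hpc hpa hppos hM1 hM2 hs0 hs.2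
    have hr : 0 < sge_F p a b s / s := div_pos hFs hs0
    have hX : 0 ≤ s ^ (-(1/2) : ℝ) := Real.rpow_nonneg hs0.le _
    have hL0 : 0 ≤ -Real.log s := by
      have := Real.log_nonpos hs0.le hs1
      linarith
    have hL2 : -Real.log s ≤ 2 * s ^ (-(1/2) : ℝ) := sge_neg_log_le hs0
    -- upper bound
    have hup : Real.log (sge_F p a b s / s)
        ≤ Real.log (sge_F p a b Mstar) - Real.log s := by
      have h1 : sge_F p a b s / s ≤ sge_F p a b Mstar / s :=
        (div_le_div_iff_of_pos_right hs0).2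
          (sge_F_mono ha hb hpc hppos hM1 hM2 ⟨hs0.le, hs.2⟩ ⟨hM1.le, le_rfl⟩ hs.2)
      have h2 := Real.log_le_log hr h1
      rwa [Real.log_div hFMs.ne' hs0.ne'] at h2
    -- lower bound
    have hlo : a * Real.log s - Real.log c0 ≤ Real.log (sge_F p a b s / s) := by
      have hlb := sge_F_lb ha hb hpc hpa hppos hM1 hM2 hs0 hs.2
      have h2 : s ^ a / c0 ≤ sge_F p a b s / s := by
        have h3 : s ^ (a + 1) / c0 / s = s ^ a / c0 := by
          rw [Real.rpow_add_one hs0.ne' a]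
          field_simp
        rw [← h3]
        exact (div_le_div_iff_of_pos_right hs0).2 hlb
      have h4 : 0 < s ^ a / c0 := by
        have := Real.rpow_pos_of_pos hs0 a
        positivity
      have h5 := Real.log_le_log h4 h2
      rwa [Real.log_div (Real.rpow_pos_of_pos hs0 a).ne' hc0pos.ne',
        Real.log_rpow hs0] at h5
    rw [sge_psif_eq hppos hM2 hs, Real.norm_eq_abs]
    have hKX : 2 * s ^ (-(1/2) : ℝ) ≤ K * s ^ (-(1/2) : ℝ) := by nlinarith
    have haL : a * (-Real.log s) ≤ a * (2 * s ^ (-(1/2) : ℝ)) :=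
      mul_le_mul_of_nonneg_left hL2 (by linarith)
    have ha2K : a * (2 * s ^ (-(1/2) : ℝ)) ≤ K * s ^ (-(1/2) : ℝ) := by nlinarith
    have hC1 : Real.log (sge_F p a b Mstar) ≤ |Real.log (sge_F p a b Mstar)| := le_abs_self _
    have hC2 : Real.log c0 ≤ |Real.log c0| := le_abs_self _
    have hC2' : -|Real.log c0| ≤ Real.log c0 := neg_abs_le _
    have hC1' : -|Real.log (sge_F p a b Mstar)| ≤ Real.log (sge_F p a b Mstar) := neg_abs_le _
    rw [abs_le]
    constructor
    · nlinarith
    · nlinarith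
  rw [IntegrableOn]
  apply MeasureTheory.Integrable.mono'
    (g := fun s : ℝ => C + K * s ^ (-(1/2) : ℝ))
  · have hII : IntervalIntegrable (fun s : ℝ => C + K * s ^ (-(1/2) : ℝ)) volume 0 Mstar :=
      (intervalIntegrable_const).add
        ((intervalIntegral.intervalIntegrable_rpow' (by norm_num)).const_mul K)
    exact (intervalIntegrable_iff_integrableOn_Ioc_of_le hM1.le).1 hII
  · exact (sge_psif_contOn ha hb hpc hpa hppos hM1 hM2).aestronglyMeasurable measurableSet_Ioc
  · exact (ae_restrict_iff' measurableSet_Ioc).2 (Filter.Eventually.of_forall hbound)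

include ha hb hpc hpa hppos hM1 hM2 in
lemma sge_psif_II {x y : ℝ} (hx : x ∈ Icc 0 Mstar) (hy : y ∈ Icc 0 Mstar) :
    IntervalIntegrable (psif p a b) volume x y := by
  rw [intervalIntegrable_iff]
  apply (sge_psif_intOn ha hb hpc hpa hppos hM1 hM2).mono_set
  rw [uIoc]
  exact Ioc_subset_Ioc (le_inf hx.1 hy.1) (sup_le hx.2 hy.2)

include ha hb hpc hpa hppos hM1 hM2 in
lemma sge_chord {MD M : ℝ} (hMD : MD ∈ Ioc 0 Mstar) (hM : M ∈ Icc 0 Mstar) :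
    psif p a b MD * (M - MD)
      ≤ (∫ s in (0:ℝ)..M, psif p a b s) - ∫ s in (0:ℝ)..MD, psif p a b s := by
  have h0I : (0:ℝ) ∈ Icc (0:ℝ) Mstar := ⟨le_rfl, hM1.le⟩
  have hMDI : MD ∈ Icc (0:ℝ) Mstar := ⟨hMD.1.le, hMD.2⟩
  have hsub : (∫ s in (0:ℝ)..M, psif p a b s) - (∫ s in (0:ℝ)..MD, psif p a b s)
      = ∫ s in MD..M, psif p a b s :=
    intervalIntegral.integral_interval_sub_left
      (sge_psif_II ha hb hpc hpa hppos hM1 hM2 h0I hM)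
      (sge_psif_II ha hb hpc hpa hppos hM1 hM2 h0I hMDI)
  rw [hsub]
  rcases le_total MD M with hle | hle
  · have hcmp : ∀ s ∈ Icc MD M, psif p a b MD ≤ psif p a b s := by
      intro s hs
      exact sge_psif_mono ha hb hpc hpa hppos hM1 hM2 hMD
        ⟨lt_of_lt_of_le hMD.1 hs.1, le_trans hs.2 hM.2⟩ hs.1
    have := intervalIntegral.integral_mono_on hle intervalIntegrable_const
      (sge_psif_II ha hb hpc hpa hppos hM1 hM2 hMDI hM) hcmp
    rw [intervalIntegral.integral_const, smul_eq_mul] at this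
    calc psif p a b MD * (M - MD) = (M - MD) * psif p a b MD := by ring
      _ ≤ ∫ s in MD..M, psif p a b s := this
  · -- M ≤ MD
    have hMMD : (∫ s in MD..M, psif p a b s) = -∫ s in M..MD, psif p a b s :=
      intervalIntegral.integral_symm M MD
    rw [hMMD, intervalIntegral.integral_of_le hle]
    have hIocsub : Ioc M MD ⊆ Ioc (0:ℝ) Mstar := Ioc_subset_Ioc hM.1 hMD.2
    have hint1 : IntegrableOn (psif p a b) (Ioc M MD) volume :=
      (sge_psif_intOn ha hb hpc hpa hppos hM1 hM2).mono_set hIocsub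
    have hcmp : ∀ s ∈ Ioc M MD, psif p a b s ≤ psif p a b MD := by
      intro s hs
      exact sge_psif_mono ha hb hpc hpa hppos hM1 hM2
        ⟨lt_of_le_of_lt hM.1 hs.1, le_trans hs.2 hMD.2⟩ hMD hs.2
    have hconst : IntegrableOn (fun _ : ℝ => psif p a b MD) (Ioc M MD) volume :=
      integrableOn_const measure_Ioc_lt_top.ne
    have hmono := setIntegral_mono_on hint1 hconst measurableSet_Ioc hcmp
    have hconstval : (∫ _ in Ioc M MD, psif p a b MD) = (MD - M) * psif p a b MD := by
      rw [setIntegral_const, measureReal_def, Real.volume_Ioc, smul_eq_mul, ENNReal.toReal_ofReal (by linarith)]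
    rw [hconstval] at hmono
    nlinarith [hmono]


include ha hb hpc hpa hppos hM1 hM2 in
lemma sge_vfun_bounds {n : ℕ} (w : Fin n → ℝ) (hw : ∀ i, 0 ≤ w i)
    (hM : ∑ i, w i ≤ Mstar) (i : Fin n) :
    0 ≤ vfun p a b w i ∧ vfun p a b w i ≤ sge_F p a b Mstar / Mstar := by
  have hM0 : 0 ≤ ∑ j, w j := Finset.sum_nonneg fun j _ => hw j
  have hFM : 0 ≤ sge_F p a b Mstar := sge_F_nonneg ha hb hpc hppos hM2 ⟨hM1.le, le_rfl⟩
  unfold vfun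
  by_cases h0 : (∑ j, w j) = 0
  · rw [if_pos h0]
    exact ⟨le_rfl, by positivity⟩
  · rw [if_neg h0]
    have hMpos : 0 < ∑ j, w j := lt_of_le_of_ne hM0 (Ne.symm h0)
    have hpM : 0 < p (∑ j, w j) := sge_p_pos hppos hM2 ⟨hM0, hM⟩
    have hFpos' : 0 ≤ sge_F p a b (∑ j, w j) := sge_F_nonneg ha hb hpc hppos hM2 ⟨hM0, hM⟩
    have heq : w i * qfun p a b (∑ j, w j) / p (∑ j, w j)
        = w i * (sge_F p a b (∑ j, w j) / (∑ j, w j)) := by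
      rw [sge_qfun_eq]; field_simp
    rw [heq]
    constructor
    · exact mul_nonneg (hw i) (div_nonneg hFpos' hM0)
    · calc w i * (sge_F p a b (∑ j, w j) / (∑ j, w j))
          ≤ (∑ j, w j) * (sge_F p a b (∑ j, w j) / (∑ j, w j)) :=
            mul_le_mul_of_nonneg_right
              (Finset.single_le_sum (fun j _ => hw j) (Finset.mem_univ i))
              (div_nonneg hFpos' hM0)
        _ = sge_F p a b (∑ j, w j) := by field_simp
        _ ≤ sge_F p a b Mstar :=
            sge_F_mono ha hb hpc hppos hM1 hM2 ⟨hM0, hM⟩ ⟨hM1.le, le_rfl⟩ hM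
        _ ≤ sge_F p a b Mstar / Mstar := by
            rw [le_div_iff₀ hM1]
            nlinarith

include ha hb hpc hpa hppos hM1 hM2 in
lemma sge_hstar_nonneg {n : ℕ} (hn : 1 ≤ n) (uD w : Fin n → ℝ)
    (huD : ∀ i, 0 < uD i) (hMD : ∑ i, uD i ≤ Mstar)
    (hw : ∀ i, 0 ≤ w i) (hM : ∑ i, w i ≤ Mstar) :
    0 ≤ hstar p a b uD w := by
  have hne : (Finset.univ : Finset (Fin n)).Nonempty := ⟨⟨0, by omega⟩, Finset.mem_univ _⟩
  have hMD0 : 0 < ∑ i, uD i := Finset.sum_pos (fun i _ => huD i) hne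
  have hM0 : 0 ≤ ∑ i, w i := Finset.sum_nonneg fun i _ => hw i
  have hFMD : 0 < sge_F p a b (∑ i, uD i) :=
    sge_F_pos ha hb hpc hpa hppos hM1 hM2 hMD0 hMD
  have hpMD : 0 < p (∑ i, uD i) := sge_p_pos hppos hM2 ⟨hMD0.le, hMD⟩
  have hlog : ∀ i : Fin n, Real.log (uD i * qfun p a b (∑ j, uD j) / p (∑ j, uD j))
      = Real.log (uD i) + psif p a b (∑ j, uD j) := by
    intro i
    have h1 : uD i * qfun p a b (∑ j, uD j) / p (∑ j, uD j)
        = uD i * (sge_F p a b (∑ j, uD j) / (∑ j, uD j)) := by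
      rw [sge_qfun_eq]; field_simp
    rw [h1, Real.log_mul (huD i).ne' (div_pos hFMD hMD0).ne',
      sge_psif_eq hppos hM2 ⟨hMD0, hMD⟩]
  have hB := sge_chord ha hb hpc hpa hppos hM1 hM2
    (MD := ∑ i, uD i) (M := ∑ i, w i) ⟨hMD0, hMD⟩ ⟨hM0, hM⟩
  have hAsum : (∑ i, (uD i * (Real.log (uD i) - 1) + 1))
      + ∑ i, Real.log (uD i) * (w i - uD i)
      ≤ ∑ i, (w i * (Real.log (w i) - 1) + 1) := by
    rw [← Finset.sum_add_distrib]
    exact Finset.sum_le_sum fun i _ => sge_entropy_scalar (hw i) (huD i)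
  have hsum : ∑ i, Real.log (uD i * qfun p a b (∑ j, uD j) / p (∑ j, uD j)) * (w i - uD i)
      = (∑ i, Real.log (uD i) * (w i - uD i))
        + psif p a b (∑ j, uD j) * ((∑ i, w i) - ∑ i, uD i) := by
    calc ∑ i, Real.log (uD i * qfun p a b (∑ j, uD j) / p (∑ j, uD j)) * (w i - uD i)
        = ∑ i, (Real.log (uD i) * (w i - uD i)
            + psif p a b (∑ j, uD j) * (w i - uD i)) := by
          refine Finset.sum_congr rfl fun i _ => ?_
          rw [hlog i]; ring
      _ = (∑ i, Real.log (uD i) * (w i - uD i))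
            + psif p a b (∑ j, uD j) * ((∑ i, w i) - ∑ i, uD i) := by
          rw [Finset.sum_add_distrib, ← Finset.mul_sum, Finset.sum_sub_distrib]
  unfold hstar hent
  rw [hsum]
  simp only [psif] at hB ⊢
  linarith [hAsum, hB]

end analytic2


/-- Discrete gradient estimate: if `u⁰,…,u^N` are successive solutions of the
implicit Euler finite-volume scheme with total biomass bounded by `M* ∈ (0,1)`
(`M^D ≤ M*`), each step satisfying the entropy inequality, then for every `i`:
`Σ_{k=1}^N Δt Σ_σ τ_σ (D_σ vᵢ(u^k))² ≤ 4 q(M*) H(u⁰) / p(M*)³`. -/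
theorem scheme_gradient_estimate (n : ℕ) (hn : 1 ≤ n) (a b : ℝ)
    (ha : 1 ≤ a) (hb : 1 ≤ b)
    (p : ℝ → ℝ) (hpc : ContinuousOn p (Icc 0 1))
    (hpa : AntitoneOn p (Icc 0 1)) (hp1 : p 1 = 0)
    (hppos : ∀ M ∈ Ico (0:ℝ) 1, 0 < p M)
    (T E : Type) [Fintype T] [Fintype E] [DecidableEq T]
    (ends : EdgeEnds T E)
    (hends : ∀ σ K L, ends σ = Sum.inr (K, L) → K ≠ L)
    (m : T → ℝ) (hm : ∀ K, 0 < m K) (τ : E → ℝ) (hτ : ∀ σ, 0 < τ σ)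
    (uD : Fin n → ℝ) (huD : ∀ i, 0 < uD i) (hMD : ∑ i, uD i < 1)
    (Δt : ℝ) (hΔt : 0 < Δt)
    (Mstar : ℝ) (hMstar : Mstar ∈ Ioo (0:ℝ) 1)
    (hMDstar : ∑ i, uD i ≤ Mstar)
    (N : ℕ) (hN : 1 ≤ N)
    (u : ℕ → T → Fin n → ℝ)
    (hu0 : ∀ K i, 0 ≤ u 0 K i)
    (hstep : ∀ k ∈ Finset.Icc 1 N, SchemeStep p a b n ends m τ uD Δt (u (k - 1)) (u k))
    (huM : ∀ k ∈ Finset.Icc 0 N, ∀ K, ∑ i, u k K i ≤ Mstar)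
    (hedi : ∀ k ∈ Finset.Icc 1 N,
      Hent p a b m uD (u k) + Δt * ∑ i, Iprod p a b ends τ uD (u k) i ≤
        Hent p a b m uD (u (k - 1))) :
    ∀ i : Fin n,
      ∑ k ∈ Finset.Icc 1 N, Δt * ∑ σ : E, τ σ *
          (edgeDiff ends (fun K => vfun p a b (u k K) i) (vfun p a b uD i) σ) ^ 2 ≤
        4 * qfun p a b Mstar * Hent p a b m uD (u 0) / p Mstar ^ 3 := by
  intro i
  obtain ⟨hMs1, hMs2⟩ := hMstar
  have hMD0 : 0 < ∑ j, uD j := Finset.sum_pos (fun j _ => huD j)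
    ⟨⟨0, by omega⟩, Finset.mem_univ _⟩
  have hpMs : 0 < p Mstar := hppos Mstar ⟨hMs1.le, hMs2⟩
  have hFMs0 : 0 ≤ sge_F p a b Mstar := sge_F_nonneg ha hb hpc hppos hMs2 ⟨hMs1.le, le_rfl⟩
  set V : ℝ := sge_F p a b Mstar / Mstar with hV
  have hV0 : 0 ≤ V := by positivity
  set Kc : ℝ := 4 * V / p Mstar ^ 2 with hKc
  have hKc0 : 0 ≤ Kc := by positivity
  -- nonnegativity and mass bounds at every time step
  have hnn : ∀ k, k ≤ N → ∀ K j, 0 ≤ u k K j := by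
    intro k hk K j
    rcases Nat.eq_zero_or_pos k with h | h
    · subst h; exact hu0 K j
    · exact (hstep k (Finset.mem_Icc.2 ⟨h, hk⟩)).1 K j
  have hMle : ∀ k, k ≤ N → ∀ K, (∑ j, u k K j) ≤ Mstar := fun k hk =>
    huM k (Finset.mem_Icc.2 ⟨Nat.zero_le _, hk⟩)
  -- vfun bounds
  have hvD : 0 ≤ vfun p a b uD i ∧ vfun p a b uD i ≤ V :=
    sge_vfun_bounds ha hb hpc hpa hppos hMs1 hMs2 uD (fun j => (huD j).le) hMDstar i
  have hvb : ∀ k, k ≤ N → ∀ K, 0 ≤ vfun p a b (u k K) i ∧ vfun p a b (u k K) i ≤ V :=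
    fun k hk K =>
      sge_vfun_bounds ha hb hpc hpa hppos hMs1 hMs2 (u k K) (hnn k hk K) (hMle k hk K) i
  -- per-edge bound
  have hedge : ∀ k ∈ Finset.Icc 1 N,
      (∑ σ : E, τ σ * (edgeDiff ends (fun K => vfun p a b (u k K) i)
        (vfun p a b uD i) σ) ^ 2) ≤ Kc * Iprod p a b ends τ uD (u k) i := by
    intro k hk
    obtain ⟨hk1, hkN⟩ := Finset.mem_Icc.1 hk
    rw [Iprod, Finset.mul_sum]
    apply Finset.sum_le_sum
    intro σ _
    have hmass : ∀ K, (∑ j, u k K j) ∈ Icc (0:ℝ) Mstar := fun K =>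
      ⟨Finset.sum_nonneg fun j _ => hnn k hkN K j, hMle k hkN K⟩
    have hpsq : ∀ K, p Mstar ^ 2 ≤ p (∑ j, u k K j) ^ 2 := fun K =>
      sge_p_sq_le hpa hppos hMs1 hMs2 (hmass K)
    have hpsqD : p Mstar ^ 2 ≤ p (∑ j, uD j) ^ 2 :=
      sge_p_sq_le hpa hppos hMs1 hMs2 ⟨hMD0.le, hMDstar⟩
    have hpm : 0 < p Mstar ^ 2 := by positivity
    rw [hKc, hV]
    cases hσ : ends σ with
    | inl K =>
      simp only [edgeDiff, pEdgeSq, hσ]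
      exact sge_edge_scalar (hτ σ).le hvD.1 (hvb k hkN K).1 hvD.2 (hvb k hkN K).2 hpm
        (by linarith [hpsq K, hpsqD])
    | inr KL =>
      simp only [edgeDiff, pEdgeSq, hσ]
      exact sge_edge_scalar (hτ σ).le (hvb k hkN KL.2).1 (hvb k hkN KL.1).1
        (hvb k hkN KL.2).2 (hvb k hkN KL.1).2 hpm
        (by linarith [hpsq KL.1, hpsq KL.2])
  -- entropy production is nonnegative
  have hIne : ∀ k, ∀ j : Fin n, 0 ≤ Iprod p a b ends τ uD (u k) j := by
    intro k j
    apply Finset.sum_nonneg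
    intro σ _
    have hpE : 0 ≤ pEdgeSq p ends (fun L => ∑ j', u k L j') (∑ j', uD j') σ := by
      cases hσ : ends σ with
      | inl K => simp only [pEdgeSq, hσ]; positivity
      | inr KL => simp only [pEdgeSq, hσ]; positivity
    exact mul_nonneg (mul_nonneg (hτ σ).le hpE) (sq_nonneg _)
  -- nonnegativity of entropies
  have hHent : ∀ k, k ≤ N → 0 ≤ Hent p a b m uD (u k) := by
    intro k hk
    have : Hent p a b m uD (u k) = ∑ K, m K * hstar p a b uD (u k K) := rfl
    rw [this]
    apply Finset.sum_nonneg
    intro K _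
    exact mul_nonneg (hm K).le
      (sge_hstar_nonneg ha hb hpc hpa hppos hMs1 hMs2 hn uD (u k K) huD hMDstar
        (hnn k hk K) (hMle k hk K))
  -- telescoping of the entropy inequalities
  have htel : ∑ k ∈ Finset.Icc 1 N,
      (Hent p a b m uD (u (k - 1)) - Hent p a b m uD (u k))
      = Hent p a b m uD (u 0) - Hent p a b m uD (u N) := by
    rw [← Finset.Ico_add_one_right_eq_Icc, Finset.sum_Ico_eq_sum_range]
    have h1 : ∀ j : ℕ, 1 + j - 1 = j := fun j => by omega
    have h2 : ∀ j : ℕ, 1 + j = j + 1 := fun j => by omega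
    calc ∑ j ∈ Finset.range (N + 1 - 1),
          (Hent p a b m uD (u (1 + j - 1)) - Hent p a b m uD (u (1 + j)))
        = ∑ j ∈ Finset.range N,
          (Hent p a b m uD (u j) - Hent p a b m uD (u (j + 1))) := by
          apply Finset.sum_congr (by norm_num)
          intro j _
          rw [h1 j, h2 j]
      _ = Hent p a b m uD (u 0) - Hent p a b m uD (u N) :=
          Finset.sum_range_sub' (fun j => Hent p a b m uD (u j)) N
  have hsumI : ∑ k ∈ Finset.Icc 1 N, Δt * (∑ j, Iprod p a b ends τ uD (u k) j)
      ≤ Hent p a b m uD (u 0) - Hent p a b m uD (u N) := by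
    rw [← htel]
    apply Finset.sum_le_sum
    intro k hk
    have := hedi k hk
    linarith
  have hsingle : ∀ k ∈ Finset.Icc 1 N,
      Iprod p a b ends τ uD (u k) i ≤ ∑ j, Iprod p a b ends τ uD (u k) j := fun k _ =>
    Finset.single_le_sum (fun j _ => hIne k j) (Finset.mem_univ i)
  have main : ∑ k ∈ Finset.Icc 1 N, Δt * ∑ σ : E, τ σ *
      (edgeDiff ends (fun K => vfun p a b (u k K) i) (vfun p a b uD i) σ) ^ 2
      ≤ Kc * Hent p a b m uD (u 0) := by
    calc ∑ k ∈ Finset.Icc 1 N, Δt * ∑ σ : E, τ σ *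
        (edgeDiff ends (fun K => vfun p a b (u k K) i) (vfun p a b uD i) σ) ^ 2
        ≤ ∑ k ∈ Finset.Icc 1 N, Kc * (Δt * Iprod p a b ends τ uD (u k) i) := by
          apply Finset.sum_le_sum
          intro k hk
          have h := mul_le_mul_of_nonneg_left (hedge k hk) hΔt.le
          calc Δt * ∑ σ : E, τ σ *
              (edgeDiff ends (fun K => vfun p a b (u k K) i) (vfun p a b uD i) σ) ^ 2
              ≤ Δt * (Kc * Iprod p a b ends τ uD (u k) i) := h
            _ = Kc * (Δt * Iprod p a b ends τ uD (u k) i) := by ring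
      _ ≤ ∑ k ∈ Finset.Icc 1 N, Kc * (Δt * ∑ j, Iprod p a b ends τ uD (u k) j) := by
          apply Finset.sum_le_sum
          intro k hk
          exact mul_le_mul_of_nonneg_left
            (mul_le_mul_of_nonneg_left (hsingle k hk) hΔt.le) hKc0
      _ = Kc * ∑ k ∈ Finset.Icc 1 N, Δt * ∑ j, Iprod p a b ends τ uD (u k) j := by
          rw [Finset.mul_sum]
      _ ≤ Kc * (Hent p a b m uD (u 0) - Hent p a b m uD (u N)) :=
          mul_le_mul_of_nonneg_left hsumI hKc0
      _ ≤ Kc * Hent p a b m uD (u 0) := by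
          have := hHent N le_rfl
          nlinarith
  have hfin : Kc * Hent p a b m uD (u 0)
      = 4 * qfun p a b Mstar * Hent p a b m uD (u 0) / p Mstar ^ 3 := by
    rw [hKc, hV, sge_qfun_eq]
    field_simp
  rw [hfin] at main
  exact main
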